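/- arXiv:2503.22694 — 2 statements merged into one kernel-verified Lean document; each statement's English description precedes it below -/
import Mathlib

section
/- There is no map from any nonempty open subset of the unit sphere S² to the Euclidean plane that preserves distances up to a fixed positive scale factor; i.e., there is no nonempty open set Ω ⊆ S², constant c > 0, and map f : Ω → ℝ² such that dist(f x, f y) = c · dist(x, y) for all x, y ∈ Ω (where distance on S² is the intrinsic/geodesic distance). -/
open scoped RealInnerProductSpace
open Real

private lemma plane_aux {A B M C : EuclideanSpace ℝ (Fin 2)} {d e : ℝ}
    (hAM : dist A M = d) (hBM : dist B M = d) (hAB : dist A B = 2 * d)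
    (hCA : dist C A = e) (hCB : dist C B = e) (hCM : dist C M = d) :
    e ^ 2 = 2 * d ^ 2 := by
  have hM : M = midpoint ℝ A B := by
    refine eq_midpoint_of_dist_eq_half ?_ ?_
    · rw [hAM, hAB]; ring
    · rw [dist_comm M B, hBM, hAB]; ring
  have hMM : M + M = A + B := by rw [hM]; exact midpoint_add_self ℝ A B
  have h1 : (C - A) + (C - B) = (C - M) + (C - M) := by
    have : (C - M) + (C - M) = C + C - (M + M) := by abel
    rw [this, hMM]; abel
  have hpar := parallelogram_law_with_norm ℝ (C - A) (C - B)
  rw [h1] at hpar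
  have h2 : (C - M) + (C - M) = (2 : ℝ) • (C - M) := (two_smul ℝ _).symm
  have h3 : (C - A) - (C - B) = B - A := by abel
  rw [h2, h3, norm_smul] at hpar
  have e1 : ‖C - M‖ = d := by rw [← dist_eq_norm]; exact hCM
  have e2 : ‖B - A‖ = 2 * d := by rw [← dist_eq_norm, dist_comm]; exact hAB
  have e3 : ‖C - A‖ = e := by rw [← dist_eq_norm]; exact hCA
  have e4 : ‖C - B‖ = e := by rw [← dist_eq_norm]; exact hCB
  rw [e1, e2, e3, e4] at hpar
  simp only [Real.norm_ofNat] at hpar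
  nlinarith [hpar]

set_option maxHeartbeats 2000000 in
/-- There is no map from a nonempty open subset `Ω` of the unit sphere `S² ⊂ ℝ³`
(openness in the subspace topology of the sphere), equipped with its intrinsic
great-circle distance `arccos ⟪x, y⟫`, to the Euclidean plane, preserving distances
up to a fixed positive scale factor `c`. -/
theorem no_scaled_isometry_sphere_to_plane :
    ¬ ∃ (Ω : Set (EuclideanSpace ℝ (Fin 3))) (c : ℝ)
        (f : EuclideanSpace ℝ (Fin 3) → EuclideanSpace ℝ (Fin 2)),
      Ω.Nonempty ∧
      Ω ⊆ Metric.sphere (0 : EuclideanSpace ℝ (Fin 3)) 1 ∧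
      IsOpen ((Subtype.val ⁻¹' Ω) :
        Set (Metric.sphere (0 : EuclideanSpace ℝ (Fin 3)) 1)) ∧
      0 < c ∧
      ∀ x ∈ Ω, ∀ y ∈ Ω, dist (f x) (f y) = c * Real.arccos ⟪x, y⟫ := by
  rintro ⟨Ω, c, f, ⟨p, hp⟩, hsub, hopen, hc, hdist⟩
  have hpS : p ∈ Metric.sphere (0 : EuclideanSpace ℝ (Fin 3)) 1 := hsub hp
  have hp1 : ‖p‖ = 1 := by rwa [mem_sphere_zero_iff_norm] at hpS
  have hp0 : p ≠ 0 := by intro h; rw [h, norm_zero] at hp1; norm_num at hp1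
  haveI : Fact (Module.finrank ℝ (EuclideanSpace ℝ (Fin 3)) = 2 + 1) := ⟨by simp⟩
  set bas := OrthonormalBasis.fromOrthogonalSpanSingleton (𝕜 := ℝ) 2 hp0 with hbas
  set u : EuclideanSpace ℝ (Fin 3) := (bas 0 : EuclideanSpace ℝ (Fin 3)) with hu
  set v : EuclideanSpace ℝ (Fin 3) := (bas 1 : EuclideanSpace ℝ (Fin 3)) with hv
  have hpp : ⟪p, p⟫ = 1 := by
    rw [real_inner_self_eq_norm_sq, hp1]; norm_num
  have huu : ⟪u, u⟫ = 1 := by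
    have := bas.orthonormal.1 0
    rw [real_inner_self_eq_norm_sq, hu]
    rw [Submodule.norm_coe] at *
    rw [this]; norm_num
  have hvv : ⟪v, v⟫ = 1 := by
    have := bas.orthonormal.1 1
    rw [real_inner_self_eq_norm_sq, hv]
    rw [Submodule.norm_coe] at *
    rw [this]; norm_num
  have huv : ⟪u, v⟫ = 0 := by
    have := bas.orthonormal.2 (by decide : (0 : Fin 2) ≠ 1)
    rw [hu, hv, ← Submodule.coe_inner]
    exact this
  have hpu : ⟪p, u⟫ = 0 := by
    have := (bas 0).2
    rw [Submodule.mem_orthogonal_singleton_iff_inner_right] at this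
    exact this
  have hvu : ⟪v, u⟫ = 0 := by rw [real_inner_comm]; exact huv
  have hpv : ⟪p, v⟫ = 0 := by
    have := (bas 1).2
    rw [Submodule.mem_orthogonal_singleton_iff_inner_right] at this
    exact this
  -- the ambient inner product formula
  have inner_f : ∀ (s t : ℝ) (w w' : EuclideanSpace ℝ (Fin 3)), ⟪p, w⟫ = 0 → ⟪p, w'⟫ = 0 →
      ⟪cos s • p + sin s • w, cos t • p + sin t • w'⟫
        = cos s * cos t + sin s * sin t * ⟪w, w'⟫ := by
    intro s t w w' h1 h2
    have h1' : ⟪w, p⟫ = 0 := by rw [real_inner_comm]; exact h1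
    simp only [inner_add_left, inner_add_right, real_inner_smul_left, real_inner_smul_right]
    rw [hpp, h1', h2]
    ring
  -- openness gives a radius
  obtain ⟨r, hr, hball⟩ := Metric.isOpen_iff.mp hopen ⟨p, hpS⟩ hp
  have memΩ : ∀ x : EuclideanSpace ℝ (Fin 3), ‖x‖ = 1 → dist x p < r → x ∈ Ω := by
    intro x hx hxp
    have hxS : x ∈ Metric.sphere (0 : EuclideanSpace ℝ (Fin 3)) 1 := by rwa [mem_sphere_zero_iff_norm]
    have : (⟨x, hxS⟩ : Metric.sphere (0 : EuclideanSpace ℝ (Fin 3)) 1) ∈ Metric.ball (⟨p, hpS⟩ : Metric.sphere (0 : EuclideanSpace ℝ (Fin 3)) 1) r := by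
      rw [Metric.mem_ball, Subtype.dist_eq]
      exact hxp
    exact hball this
  -- key step: for all small ε, arccos (cos ε ^ 2) ^ 2 = 2 * ε ^ 2
  have key : ∀ ε : ℝ, 0 < ε → ε < min r (π / 2) →
      Real.arccos (cos ε ^ 2) ^ 2 = 2 * ε ^ 2 := by
    intro ε hε hεlt
    have hεr : ε < r := lt_of_lt_of_le hεlt (min_le_left _ _)
    have hεπ : ε < π / 2 := lt_of_lt_of_le hεlt (min_le_right _ _)
    have hπ := Real.pi_pos
    -- the four points
    set a : EuclideanSpace ℝ (Fin 3) := cos ε • p + sin ε • u with ha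
    set b : EuclideanSpace ℝ (Fin 3) := cos ε • p + sin ε • (-u) with hb
    set cc : EuclideanSpace ℝ (Fin 3) := cos ε • p + sin ε • v with hcc
    have hpnu : ⟪p, -u⟫ = 0 := by rw [inner_neg_right, hpu, neg_zero]
    -- norms and membership
    have norm_mem : ∀ w : EuclideanSpace ℝ (Fin 3), ⟪p, w⟫ = 0 → ⟪w, w⟫ = 1 →
        (cos ε • p + sin ε • w) ∈ Ω := by
      intro w hw hww
      have hself : ⟪cos ε • p + sin ε • w, cos ε • p + sin ε • w⟫ = 1 := by
        rw [inner_f ε ε w w hw hw, hww]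
        nlinarith [sin_sq_add_cos_sq ε]
      have hnorm : ‖cos ε • p + sin ε • w‖ = 1 := by
        have h2 : ‖cos ε • p + sin ε • w‖ ^ 2 = 1 := by
          rw [← real_inner_self_eq_norm_sq]; exact hself
        nlinarith [norm_nonneg (cos ε • p + sin ε • w)]
      refine memΩ _ hnorm ?_
      have hd2 : dist (cos ε • p + sin ε • w) p ^ 2 = 2 - 2 * cos ε := by
        rw [dist_eq_norm, ← real_inner_self_eq_norm_sq]
        have : cos ε • p + sin ε • w - p = (cos ε - 1) • p + sin ε • w := by
          rw [sub_smul, one_smul]; abel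
        rw [this]
        have hw' : ⟪w, p⟫ = 0 := by rw [real_inner_comm]; exact hw
        simp only [inner_add_left, inner_add_right, real_inner_smul_left, real_inner_smul_right]
        rw [hpp, hw, hw', hww]
        nlinarith [sin_sq_add_cos_sq ε]
      -- 2 - 2 cos ε ≤ ε ^ 2
      have hcos : 2 - 2 * cos ε ≤ ε ^ 2 := by
        have hcs := Real.cos_sq (ε / 2)
        have h2e : 2 * (ε / 2) = ε := by ring
        rw [h2e] at hcs
        have hsin : sin (ε / 2) ≤ ε / 2 := (Real.sin_lt (by linarith)).le
        have hsin0 : 0 ≤ sin (ε / 2) := Real.sin_nonneg_of_nonneg_of_le_pi (by linarith) (by linarith)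
        have hsc := sin_sq_add_cos_sq (ε / 2)
        nlinarith [hsin, hsin0, hcs, hsc]
      have := dist_nonneg (x := cos ε • p + sin ε • w) (y := p)
      nlinarith [hd2, hcos, this]
    have haΩ : a ∈ Ω := norm_mem u hpu huu
    have hbΩ : b ∈ Ω := norm_mem (-u) hpnu (by rw [inner_neg_neg]; exact huu)
    have hcΩ : cc ∈ Ω := norm_mem v hpv hvv
    have hpΩ : p ∈ Ω := hp
    -- inner products between the points
    have hp_eq : p = cos 0 • p + sin 0 • u := by simp
    have hap : ⟪a, p⟫ = cos ε := by
      rw [ha]; nth_rewrite 2 [hp_eq]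
      rw [inner_f ε 0 u u hpu hpu, huu]; simp
    have hbp : ⟪b, p⟫ = cos ε := by
      rw [hb]; nth_rewrite 2 [hp_eq]
      rw [inner_f ε 0 (-u) u hpnu hpu]; simp
    have hcp : ⟪cc, p⟫ = cos ε := by
      rw [hcc]; nth_rewrite 2 [hp_eq]
      rw [inner_f ε 0 v u hpv hpu, hvu]; simp
    have hab : ⟪a, b⟫ = cos (2 * ε) := by
      rw [ha, hb, inner_f ε ε u (-u) hpu hpnu, inner_neg_right, huu, Real.cos_two_mul]
      nlinarith [sin_sq_add_cos_sq ε]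
    have hca : ⟪cc, a⟫ = cos ε ^ 2 := by
      rw [hcc, ha, inner_f ε ε v u hpv hpu, hvu]; ring
    have hcb : ⟪cc, b⟫ = cos ε ^ 2 := by
      rw [hcc, hb, inner_f ε ε v (-u) hpv hpnu, inner_neg_right, hvu]; ring
    -- arccos values
    have harc1 : Real.arccos (cos ε) = ε := Real.arccos_cos (by linarith) (by linarith)
    have harc2 : Real.arccos (cos (2 * ε)) = 2 * ε := Real.arccos_cos (by linarith) (by linarith)
    -- distances in the plane
    have dAM : dist (f a) (f p) = c * ε := by rw [hdist a haΩ p hpΩ, hap, harc1]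
    have dBM : dist (f b) (f p) = c * ε := by rw [hdist b hbΩ p hpΩ, hbp, harc1]
    have dAB : dist (f a) (f b) = 2 * (c * ε) := by
      rw [hdist a haΩ b hbΩ, hab, harc2]; ring
    have dCA : dist (f cc) (f a) = c * Real.arccos (cos ε ^ 2) := by
      rw [hdist cc hcΩ a haΩ, hca]
    have dCB : dist (f cc) (f b) = c * Real.arccos (cos ε ^ 2) := by
      rw [hdist cc hcΩ b hbΩ, hcb]
    have dCM : dist (f cc) (f p) = c * ε := by rw [hdist cc hcΩ p hpΩ, hcp, harc1]
    have := plane_aux dAM dBM dAB dCA dCB dCM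
    have hc2 : (0 : ℝ) < c ^ 2 := by positivity
    nlinarith [this]
  -- now derive a contradiction
  have hπ := Real.pi_pos
  have hmin : 0 < min r (π / 2) := lt_min hr (by linarith)
  set ε := min r (π / 2) / 2 with hεdef
  have hε0 : 0 < ε := by positivity
  have hεlt : ε < min r (π / 2) := by rw [hεdef]; linarith
  have h1 := key ε hε0 hεlt
  have h2 := key (ε / 2) (by positivity) (by linarith)
  have hDnn := Real.arccos_nonneg (cos ε ^ 2)
  have hD'nn := Real.arccos_nonneg (cos (ε / 2) ^ 2)
  have hDD' : Real.arccos (cos ε ^ 2) = 2 * Real.arccos (cos (ε / 2) ^ 2) := by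
    refine (sq_eq_sq₀ hDnn (by linarith)).mp ?_
    rw [h1, mul_pow, h2]; ring
  have hcosD : cos (Real.arccos (cos ε ^ 2)) = cos ε ^ 2 :=
    Real.cos_arccos (by nlinarith [sq_nonneg (cos ε)]) (by nlinarith [sin_sq_add_cos_sq ε])
  have hcosD' : cos (Real.arccos (cos (ε / 2) ^ 2)) = cos (ε / 2) ^ 2 :=
    Real.cos_arccos (by nlinarith [sq_nonneg (cos (ε / 2))]) (by nlinarith [sin_sq_add_cos_sq (ε / 2)])
  have hhalf : cos (ε / 2) ^ 2 = 1 / 2 + cos ε / 2 := by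
    have := Real.cos_sq (ε / 2)
    rwa [show 2 * (ε / 2) = ε by ring] at this
  have hcos2 : cos (Real.arccos (cos ε ^ 2)) = 2 * cos (Real.arccos (cos (ε / 2) ^ 2)) ^ 2 - 1 := by
    rw [hDD']; exact Real.cos_two_mul _
  have hlt : cos ε < 1 := by
    have h := Real.cos_lt_cos_of_nonneg_of_le_pi (le_refl 0) ?_ hε0
    · rwa [Real.cos_zero] at h
    · have := min_le_right r (π / 2); rw [hεdef]; linarith
  rw [hcosD, hcosD', hhalf] at hcos2
  nlinarith [hcos2, hlt, sq_nonneg (cos ε - 1)]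
end

section
/- Let ABC be a spherical triangle on the unit sphere with all side lengths less than π, let D be the midpoint of the geodesic arc AB and E the midpoint of the geodesic arc BC. Then the geodesic distance from D to E is strictly greater than half the geodesic distance from A to C. (Menelaus, Spherics, Proposition 27.) -/
open scoped RealInnerProductSpace
open Real

private lemma gram_pos (A B C : EuclideanSpace ℝ (Fin 3))
    (hA : ‖A‖ = 1) (hB : ‖B‖ = 1) (hC : ‖C‖ = 1)
    (hind : LinearIndependent ℝ ![A, B, C]) :
    0 < 1 - ⟪A,C⟫^2 - ⟪A,B⟫^2 - ⟪B,C⟫^2 + 2*⟪A,C⟫*⟪A,B⟫*⟪B,C⟫ := by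
  classical
  set M : Matrix (Fin 3) (Fin 3) ℝ := Matrix.of (fun i => (![A, B, C] i : EuclideanSpace ℝ (Fin 3))) with hM
  have hrows : LinearIndependent ℝ (fun i => M i) := by
    have := hind.map' (WithLp.linearEquiv 2 ℝ (Fin 3 → ℝ)).toLinearMap (LinearEquiv.ker _)
    exact this
  have hunit : IsUnit M := Matrix.linearIndependent_rows_iff_isUnit.mp hrows
  have hdetM : M.det ≠ 0 := by
    intro h
    exact (Matrix.isUnit_iff_isUnit_det M |>.mp hunit).ne_zero h
  have hGpos : 0 < (M * M.transpose).det := by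
    rw [Matrix.det_mul, Matrix.det_transpose]
    exact mul_self_pos.mpr hdetM
  have inner_eq : ∀ x y : EuclideanSpace ℝ (Fin 3), ⟪x, y⟫ = ∑ k, x k * y k := by
    intro x y
    simp [PiLp.inner_apply, RCLike.inner_apply, mul_comm]
  have hAA : ⟪A,A⟫ = 1 := by
    rw [real_inner_self_eq_norm_mul_norm, hA]; ring
  have hBB : ⟪B,B⟫ = 1 := by
    rw [real_inner_self_eq_norm_mul_norm, hB]; ring
  have hCC : ⟪C,C⟫ = 1 := by
    rw [real_inner_self_eq_norm_mul_norm, hC]; ring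
  have hentry : ∀ i j, (M * M.transpose) i j = ⟪(![A,B,C] i : EuclideanSpace ℝ (Fin 3)), ![A,B,C] j⟫ := by
    intro i j
    rw [Matrix.mul_apply, inner_eq]
    simp [hM, Matrix.transpose_apply]
  have hdet : (M * M.transpose).det = 1 - ⟪A,C⟫^2 - ⟪A,B⟫^2 - ⟪B,C⟫^2 + 2*⟪A,C⟫*⟪A,B⟫*⟪B,C⟫ := by
    rw [Matrix.det_fin_three]
    rw [hentry, hentry, hentry, hentry, hentry, hentry, hentry, hentry, hentry]
    simp only [Matrix.cons_val_zero, Matrix.cons_val_one, Matrix.head_cons, Matrix.cons_val_two, Matrix.tail_cons]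
    rw [hAA, hBB, hCC, real_inner_comm B A, real_inner_comm C A, real_inner_comm C B]
    ring
  rw [hdet] at hGpos
  exact hGpos

private lemma menelaus_arith (t u v a b : ℝ)
    (ht1 : -1 ≤ t) (ht2 : t ≤ 1) (hu1 : -1 ≤ u) (hu2 : u ≤ 1)
    (hv1 : -1 ≤ v) (hv2 : v ≤ 1)
    (hG : 0 < 1 - t^2 - u^2 - v^2 + 2*t*u*v)
    (ha0 : 0 ≤ a) (hb0 : 0 ≤ b)
    (ha2 : a ^ 2 = 2 + 2 * u) (hb2 : b ^ 2 = 2 + 2 * v) :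
    Real.arccos t / 2 < Real.arccos ((1 + t + u + v) / (a * b)) := by
  have htpos : 0 < 1 + t := by
    nlinarith [sq_nonneg (1 + t + u + v),
      mul_nonneg (show (0:ℝ) ≤ 1 + u by linarith) (show (0:ℝ) ≤ 1 + v by linarith)]
  have hupos : 0 < 1 + u := by
    nlinarith [sq_nonneg (1 + t + u + v),
      mul_nonneg (show (0:ℝ) ≤ 1 + t by linarith) (show (0:ℝ) ≤ 1 + v by linarith)]
  have hvpos : 0 < 1 + v := by
    nlinarith [sq_nonneg (1 + t + u + v),
      mul_nonneg (show (0:ℝ) ≤ 1 + t by linarith) (show (0:ℝ) ≤ 1 + u by linarith)]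
  have hapos : 0 < a := by nlinarith
  have hbpos : 0 < b := by nlinarith
  have hab : 0 < a * b := mul_pos hapos hbpos
  obtain ⟨s, hs⟩ : ∃ s, s = Real.sqrt ((1 + t) / 2) := ⟨_, rfl⟩
  have hs2 : s ^ 2 = (1 + t) / 2 := by rw [hs]; exact Real.sq_sqrt (by linarith)
  have hs0 : 0 ≤ s := hs ▸ Real.sqrt_nonneg _
  have hs1 : s ≤ 1 := by nlinarith
  obtain ⟨w, hw⟩ : ∃ w, w = (1 + t + u + v) / (a * b) := ⟨_, rfl⟩
  rw [← hw]
  have habs : (s * (a * b)) ^ 2 = 2 * (1 + t) * (1 + u) * (1 + v) := by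
    have h : (s * (a * b)) ^ 2 = s ^ 2 * a ^ 2 * b ^ 2 := by ring
    rw [h, hs2, ha2, hb2]; ring
  have hNsq : (1 + t + u + v) ^ 2 < (s * (a * b)) ^ 2 := by
    rw [habs]; nlinarith [hG]
  have hsab : 0 ≤ s * (a * b) := by positivity
  have hN : 1 + t + u + v < s * (a * b) := lt_of_pow_lt_pow_left₀ 2 hsab hNsq
  have hss : s ^ 2 ≤ 1 := by rw [hs2]; linarith
  have hNsq2 : (-(1 + t + u + v)) ^ 2 < (a * b) ^ 2 := by
    have h1 : (s * (a * b)) ^ 2 = s ^ 2 * (a * b) ^ 2 := by ring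
    have h2 : s ^ 2 * (a * b) ^ 2 ≤ (a * b) ^ 2 := by
      linarith [mul_nonneg (show (0:ℝ) ≤ 1 - s ^ 2 by linarith) (sq_nonneg (a * b))]
    calc (-(1 + t + u + v)) ^ 2 = (1 + t + u + v) ^ 2 := by ring
      _ < (s * (a * b)) ^ 2 := hNsq
      _ = s ^ 2 * (a * b) ^ 2 := h1
      _ ≤ (a * b) ^ 2 := h2
  have hNlow : -(a * b) ≤ 1 + t + u + v := by
    have := lt_of_pow_lt_pow_left₀ 2 hab.le hNsq2
    linarith
  have hkey : w < s := by
    rw [hw, div_lt_iff₀ hab]; exact hN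
  have hwlow : -1 ≤ w := by
    rw [hw, le_div_iff₀ hab]; linarith
  have hwhigh : w ≤ 1 := le_trans hkey.le hs1
  have harc1 : Real.arccos t / 2 = Real.arccos s := by
    have h1 : Real.cos (Real.arccos t / 2) = s := by
      rw [Real.cos_half (by linarith [Real.arccos_nonneg t, Real.pi_pos])
        (Real.arccos_le_pi t), Real.cos_arccos ht1 ht2]
      exact hs.symm
    rw [← h1, Real.arccos_cos (div_nonneg (Real.arccos_nonneg t) (by norm_num))
      (by linarith [Real.arccos_le_pi t, Real.pi_pos])]
  rw [harc1]
  exact Real.strictAntiOn_arccos ⟨hwlow, hwhigh⟩ ⟨by linarith, hs1⟩ hkey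

/-- Menelaus, *Spherics*, Proposition 27: in a nondegenerate spherical triangle `ABC`
on the unit sphere (vertices linearly independent, all sides of geodesic length `< π`),
if `D` is the midpoint of arc `AB` and `E` the midpoint of arc `BC`
(explicitly `M = (P + Q)/‖P + Q‖`), then the geodesic distance `DE` is strictly
greater than half the geodesic distance `AC`.  Geodesic distance is
`dist(x, y) = arccos ⟪x, y⟫`. -/
theorem menelaus_prop_27
    (A B C : EuclideanSpace ℝ (Fin 3))
    (hA : ‖A‖ = 1) (hB : ‖B‖ = 1) (hC : ‖C‖ = 1)
    (hind : LinearIndependent ℝ ![A, B, C])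
    (hAB : Real.arccos ⟪A, B⟫ < π) (hBC : Real.arccos ⟪B, C⟫ < π)
    (hAC : Real.arccos ⟪A, C⟫ < π)
    (D E : EuclideanSpace ℝ (Fin 3))
    (hD : D = ‖A + B‖⁻¹ • (A + B))
    (hE : E = ‖B + C‖⁻¹ • (B + C)) :
    Real.arccos ⟪A, C⟫ / 2 < Real.arccos ⟪D, E⟫ := by
  have hG := gram_pos A B C hA hB hC hind
  have hct : |⟪A,C⟫| ≤ 1 := by
    have := abs_real_inner_le_norm A C; rw [hA, hC] at this; simpa using this
  have hcu : |⟪A,B⟫| ≤ 1 := by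
    have := abs_real_inner_le_norm A B; rw [hA, hB] at this; simpa using this
  have hcv : |⟪B,C⟫| ≤ 1 := by
    have := abs_real_inner_le_norm B C; rw [hB, hC] at this; simpa using this
  have hBB : ⟪B, B⟫ = 1 := by rw [real_inner_self_eq_norm_mul_norm, hB]; ring
  have ha2 : ‖A + B‖ ^ 2 = 2 + 2 * ⟪A,B⟫ := by
    rw [norm_add_sq_real, hA, hB]; ring
  have hb2 : ‖B + C‖ ^ 2 = 2 + 2 * ⟪B,C⟫ := by
    rw [norm_add_sq_real, hB, hC]; ring
  have hDE : ⟪D, E⟫ = (1 + ⟪A,C⟫ + ⟪A,B⟫ + ⟪B,C⟫) / (‖A + B‖ * ‖B + C‖) := by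
    rw [hD, hE, real_inner_smul_left, real_inner_smul_right, inner_add_left,
      inner_add_right, inner_add_right, hBB, real_inner_comm C A]
    field_simp
    ring
  rw [hDE]
  exact menelaus_arith ⟪A,C⟫ ⟪A,B⟫ ⟪B,C⟫ ‖A + B‖ ‖B + C‖
    (neg_le_of_abs_le hct) (le_of_abs_le hct)
    (neg_le_of_abs_le hcu) (le_of_abs_le hcu)
    (neg_le_of_abs_le hcv) (le_of_abs_le hcv)
    hG (norm_nonneg _) (norm_nonneg _) ha2 hb2
end
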